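/- arXiv:2405.05152 — 2 statements merged into one kernel-verified Lean document; each statement's English description precedes it below -/
import Mathlib

section
/- First Barnes Lemma: for complex numbers a₁, a₂, b₁, b₂ with positive real parts, (1/(2π)) ∫_{ℝ} Γ(a₁ - iγ)Γ(a₂ - iγ)Γ(b₁ + iγ)Γ(b₂ + iγ) dγ = Γ(a₁+b₁)Γ(a₁+b₂)Γ(a₂+b₁)Γ(a₂+b₂) / Γ(a₁+a₂+b₁+b₂). -/
open MeasureTheory Real Set Complex
open scoped FourierTransform

namespace Barnes

lemma cpow_posreal {r : ℝ} (hr : 0 < r) (w : ℂ) :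
    (r : ℂ) ^ w = Complex.exp (w * Real.log r) := by
  rw [Complex.cpow_def_of_ne_zero (by exact_mod_cast hr.ne'),
    ← Complex.ofReal_log hr.le, mul_comm]

lemma Gamma_ne_zero' {s : ℂ} (hs : 0 < s.re) : Complex.Gamma s ≠ 0 := by
  apply Complex.Gamma_ne_zero
  intro m h
  rw [h] at hs
  simp only [Complex.neg_re, Complex.natCast_re] at hs
  have : (0:ℝ) ≤ m := Nat.cast_nonneg m
  linarith

/-- The Beta-type integrand on `(0, ∞)`, in exponential normal form. -/
noncomputable def bInt (u v : ℂ) (x : ℝ) : ℂ :=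
  Complex.exp ((u - 1) * Real.log x - (u + v) * Real.log (1 + x))

lemma phi_hasDeriv : ∀ t ∈ Ioo (0:ℝ) 1,
    HasDerivWithinAt (fun t : ℝ => t / (1 - t)) (((1 - t) ^ 2)⁻¹) (Ioo (0:ℝ) 1) t := by
  intro t ht
  have h1 : (1 - t) ≠ 0 := by nlinarith [ht.2]
  have : HasDerivAt (fun t : ℝ => t / (1 - t))
      ((1 * (1 - t) - t * (-1)) / (1 - t) ^ 2) t :=
    (hasDerivAt_id t).div ((hasDerivAt_id t).const_sub 1) h1
  convert this.hasDerivWithinAt using 1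
  · rfl
  · rfl
  rw [inv_eq_one_div]; congr 1; ring

lemma phi_injOn : InjOn (fun t : ℝ => t / (1 - t)) (Ioo 0 1) := by
  intro s hs t ht h
  have hs1 : (1 - s) ≠ 0 := by nlinarith [hs.2]
  have ht1 : (1 - t) ≠ 0 := by nlinarith [ht.2]
  field_simp at h
  linarith [h]

lemma phi_image : (fun t : ℝ => t / (1 - t)) '' (Ioo 0 1) = Ioi 0 := by
  ext y
  constructor
  · rintro ⟨t, ht, rfl⟩
    exact div_pos ht.1 (by nlinarith [ht.2])
  · intro hy
    refine ⟨y / (1 + y), ⟨div_pos hy (by linarith [mem_Ioi.mp hy]), ?_⟩, ?_⟩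
    · rw [div_lt_one (by linarith [mem_Ioi.mp hy])]; linarith [mem_Ioi.mp hy]
    · have h1 : (0:ℝ) < 1 + y := by linarith [mem_Ioi.mp hy]
      field_simp
      ring

lemma subst_eq {u v : ℂ} (t : ℝ) (ht : t ∈ Ioo (0:ℝ) 1) :
    |((1 - t) ^ 2)⁻¹| • bInt u v (t / (1 - t))
      = (t : ℂ) ^ (u - 1) * ((1:ℂ) - t) ^ (v - 1) := by
  have ht0 : (0:ℝ) < t := ht.1
  have ht1 : (0:ℝ) < 1 - t := by nlinarith [ht.2]
  have hphi : (0:ℝ) < t / (1 - t) := div_pos ht0 ht1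
  have hlog1 : Real.log (t / (1 - t)) = Real.log t - Real.log (1 - t) :=
    Real.log_div ht0.ne' ht1.ne'
  have hlog2 : Real.log (1 + t / (1 - t)) = - Real.log (1 - t) := by
    have : 1 + t / (1 - t) = (1 - t)⁻¹ := by field_simp; ring
    rw [this, Real.log_inv]
  have habs : |((1 - t) ^ 2)⁻¹| = Real.exp (-(2 * Real.log (1 - t))) := by
    rw [abs_of_pos (by positivity), Real.exp_neg, ← Real.exp_log (x := (1-t)^2) (by positivity),
      Real.log_pow]
    push_cast
    ring_nf
  have hc : ((1:ℂ) - t) = ((1 - t : ℝ) : ℂ) := by push_cast; ring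
  rw [bInt, hlog1, hlog2, habs, cpow_posreal ht0, hc, cpow_posreal ht1]
  rw [real_smul, Complex.ofReal_exp, ← Complex.exp_add, ← Complex.exp_add]
  congr 1
  push_cast
  ring

lemma bInt_integrableOn {u v : ℂ} (hu : 0 < u.re) (hv : 0 < v.re) :
    IntegrableOn (bInt u v) (Ioi (0:ℝ)) := by
  rw [← phi_image, integrableOn_image_iff_integrableOn_abs_deriv_smul measurableSet_Ioo
    phi_hasDeriv phi_injOn]
  have h := (Complex.betaIntegral_convergent hu hv)
  rw [intervalIntegrable_iff_integrableOn_Ioc_of_le zero_le_one] at h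
  refine (h.mono_set Ioo_subset_Ioc_self).congr_fun ?_ measurableSet_Ioo
  intro t ht
  exact (subst_eq t ht).symm

lemma bInt_integral {u v : ℂ} (hu : 0 < u.re) (hv : 0 < v.re) :
    ∫ x in Ioi (0:ℝ), bInt u v x
      = Complex.Gamma u * Complex.Gamma v / Complex.Gamma (u + v) := by
  rw [← phi_image, integral_image_eq_integral_abs_deriv_smul measurableSet_Ioo
    phi_hasDeriv phi_injOn]
  rw [setIntegral_congr_fun measurableSet_Ioo (fun t ht => subst_eq (u := u) (v := v) t ht)]
  have hbeta : Complex.betaIntegral u v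
      = ∫ t in Ioo (0:ℝ) 1, (t : ℂ) ^ (u - 1) * ((1:ℂ) - t) ^ (v - 1) := by
    rw [Complex.betaIntegral, intervalIntegral.integral_of_le zero_le_one,
      integral_Ioc_eq_integral_Ioo]
  rw [← hbeta]
  have h := Complex.Gamma_mul_Gamma_eq_betaIntegral hu hv
  have hne : Complex.Gamma (u + v) ≠ 0 := Gamma_ne_zero' (by simp [Complex.add_re]; positivity)
  field_simp [h]
  rw [h]; ring


/-- `Gfun c w u = e^{-cu} (1+e^{-u})^{-w}` in exponential normal form. -/
noncomputable def Gfun (c w : ℂ) (u : ℝ) : ℂ :=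
  Complex.exp (-(c * u) - w * Real.log (1 + Real.exp (-u)))

lemma one_add_exp_pos (u : ℝ) : (0:ℝ) < 1 + Real.exp (-u) := by positivity

lemma norm_Gfun (c w : ℂ) (u : ℝ) :
    ‖Gfun c w u‖ = Real.exp (-(c.re * u) - w.re * Real.log (1 + Real.exp (-u))) := by
  rw [Gfun, Complex.norm_exp]
  congr 1
  simp [Complex.sub_re, Complex.neg_re, Complex.mul_re]

lemma continuous_logexp : Continuous (fun u : ℝ => Real.log (1 + Real.exp (-u))) := by
  apply Continuous.log (by fun_prop)
  intro u
  exact (one_add_exp_pos u).ne'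

lemma continuous_Gfun (c w : ℂ) : Continuous (Gfun c w) := by
  apply Complex.continuous_exp.comp
  apply Continuous.sub (by fun_prop)
  exact continuous_const.mul (Complex.continuous_ofReal.comp continuous_logexp)

lemma integrable_exp_neg_mul_abs {m : ℝ} (hm : 0 < m) :
    Integrable (fun u : ℝ => Real.exp (-(m * |u|))) := by
  have h1 : IntegrableOn (fun u : ℝ => Real.exp (-(m * |u|))) (Ioi 0) := by
    refine ((exp_neg_integrableOn_Ioi 0 hm)).congr_fun ?_ measurableSet_Ioi
    intro u hu
    simp only
    rw [_root_.abs_of_pos hu, neg_mul]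
  have h0 : IntegrableOn (fun u : ℝ => Real.exp (-(m * |u|))) (Ici 0) := by
    rwa [integrableOn_Ici_iff_integrableOn_Ioi]
  have h2 : IntegrableOn (fun u : ℝ => Real.exp (-(m * |u|))) (Iic 0) := by
    have := (MeasurePreserving.integrableOn_comp_preimage
      (Measure.measurePreserving_neg (volume : Measure ℝ))
      (Homeomorph.neg ℝ).measurableEmbedding).mpr h0
    have he : (fun u : ℝ => Real.exp (-(m * |u|))) ∘ (Neg.neg : ℝ → ℝ)
        = fun u : ℝ => Real.exp (-(m * |u|)) := by
      funext u; simp [abs_neg]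
    rw [he] at this
    have hs : (Neg.neg : ℝ → ℝ) ⁻¹' (Ici 0) = Iic 0 := by
      ext u; simp
    rwa [hs] at this
  rw [← integrableOn_univ, ← Set.Iic_union_Ioi (a := (0:ℝ))]
  exact h2.union h1

lemma integrable_Gfun {c w : ℂ} (hc : 0 < c.re) (hw : c.re < w.re) :
    Integrable (Gfun c w) := by
  set m := min c.re (w.re - c.re) with hm
  have hm0 : 0 < m := lt_min hc (by linarith)
  refine (integrable_exp_neg_mul_abs hm0).mono'
    (continuous_Gfun c w).aestronglyMeasurable (ae_of_all _ fun u => ?_)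
  rw [norm_Gfun]
  apply Real.exp_le_exp.mpr
  have hL : 0 ≤ Real.log (1 + Real.exp (-u)) :=
    Real.log_nonneg (by nlinarith [Real.exp_pos (-u)])
  have hwpos : 0 < w.re := by linarith
  rcases le_or_gt 0 u with h | h
  · rw [_root_.abs_of_nonneg h]
    have : m * u ≤ c.re * u := mul_le_mul_of_nonneg_right (min_le_left _ _) h
    nlinarith
  · rw [abs_of_neg h]
    have hL2 : -u ≤ Real.log (1 + Real.exp (-u)) := by
      nth_rewrite 1 [← Real.log_exp (-u)]
      exact Real.log_le_log (Real.exp_pos _) (by nlinarith [Real.exp_pos (-u)])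
    have h1 : w.re * (-u) ≤ w.re * Real.log (1 + Real.exp (-u)) :=
      mul_le_mul_of_nonneg_left hL2 hwpos.le
    have h2 : m * (-u) ≤ (w.re - c.re) * (-u) :=
      mul_le_mul_of_nonneg_right (min_le_right _ _) (by linarith)
    nlinarith

lemma hasDerivAt_logexp (u : ℝ) :
    HasDerivAt (fun u : ℝ => Real.log (1 + Real.exp (-u)))
      (-Real.exp (-u) / (1 + Real.exp (-u))) u := by
  have h1 : HasDerivAt (fun u : ℝ => 1 + Real.exp (-u)) (-Real.exp (-u)) u := by
    have := ((Real.hasDerivAt_exp (-u)).comp u (hasDerivAt_neg u)).const_add (1:ℝ)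
    simpa [mul_comm] using this
  exact h1.log (one_add_exp_pos u).ne'

lemma Gfun_succ (c w : ℂ) (u : ℝ) :
    ((Real.exp (-u) / (1 + Real.exp (-u)) : ℝ) : ℂ) * Gfun c w u
      = Gfun (c + 1) (w + 1) u := by
  have hkey : (Real.exp (-u) / (1 + Real.exp (-u)) : ℝ)
      = Real.exp (-u - Real.log (1 + Real.exp (-u))) := by
    rw [Real.exp_sub, Real.exp_log (one_add_exp_pos u)]
  rw [hkey, Complex.ofReal_exp, Gfun, Gfun, ← Complex.exp_add]
  congr 1
  push_cast
  ring

lemma hasDerivAt_Gfun (c w : ℂ) (u : ℝ) :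
    HasDerivAt (Gfun c w) (-c * Gfun c w u + w * Gfun (c + 1) (w + 1) u) u := by
  have hin : HasDerivAt (fun u : ℝ => -(c * u) - w * Real.log (1 + Real.exp (-u)))
      (-c - w * ((-Real.exp (-u) / (1 + Real.exp (-u)) : ℝ) : ℂ)) u := by
    have h1 : HasDerivAt (fun u : ℝ => -(c * (u:ℂ))) (-c) u := by
      have := ((hasDerivAt_id u).ofReal_comp (z := u)).const_mul c
      have h' : HasDerivAt (-fun y : ℝ => c * (y:ℂ)) (-c) u := by simpa using this.neg
      exact h'
    have h2 : HasDerivAt (fun u : ℝ => ((Real.log (1 + Real.exp (-u)) : ℝ) : ℂ))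
        ((( -Real.exp (-u) / (1 + Real.exp (-u)) : ℝ)) : ℂ) u :=
      (hasDerivAt_logexp u).ofReal_comp
    exact h1.sub (h2.const_mul w)
  have := hin.cexp
  convert this using 1
  · rfl
  rw [show Complex.exp (-(c * u) - w * Real.log (1 + Real.exp (-u))) = Gfun c w u from rfl]
  have := Gfun_succ c w u
  push_cast at this ⊢
  rw [← this]
  ring

/-- `bfun a b x = x^b (1+x)^{-(a+b)}` in exponential normal form. -/
noncomputable def bfun (a b : ℂ) (x : ℝ) : ℂ :=
  Complex.exp (b * Real.log x - (a + b) * Real.log (1 + x))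

lemma bfun_exp (a b : ℂ) (u : ℝ) : bfun a b (Real.exp (-u)) = Gfun b (a + b) u := by
  rw [bfun, Gfun, Real.log_exp]
  congr 1
  push_cast
  ring

lemma mellin_integrand_eq (a b s : ℂ) {x : ℝ} (hx : 0 < x) :
    (x : ℂ) ^ (s - 1) • bfun a b x = bInt (b + s) (a - s) x := by
  rw [cpow_posreal hx, smul_eq_mul, bfun, bInt, ← Complex.exp_add]
  congr 1
  push_cast
  ring

lemma mellin_bfun {a b : ℂ} (ha : 0 < a.re) (hb : 0 < b.re) (s : ℂ)
    (hs1 : 0 < (b + s).re) (hs2 : 0 < (a - s).re) :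
    mellin (bfun a b) s
      = Complex.Gamma (b + s) * Complex.Gamma (a - s) / Complex.Gamma (a + b) := by
  rw [mellin, setIntegral_congr_fun measurableSet_Ioi
    (fun x hx => mellin_integrand_eq a b s hx), bInt_integral hs1 hs2]
  congr 2
  ring

lemma mellinConvergent_bfun {a b : ℂ} (ha : 0 < a.re) (hb : 0 < b.re) :
    MellinConvergent (bfun a b) 0 := by
  unfold MellinConvergent
  refine ((bInt_integrableOn (u := b) (v := a) hb ha).congr_fun ?_ measurableSet_Ioi)
  intro x hx
  have := mellin_integrand_eq a b 0 hx
  simp only [add_zero, sub_zero] at this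
  exact this.symm

lemma Gfun_re_lt {a b : ℂ} (ha : 0 < a.re) : b.re < (a + b).re := by
  simp only [Complex.add_re]; linarith

lemma mellin_bfun_eq_fourier {a b : ℂ} (γ : ℝ) :
    mellin (bfun a b) ((γ : ℂ) * Complex.I)
      = 𝓕 (Gfun b (a + b)) (γ / (2 * π)) := by
  have h := mellin_eq_fourier (bfun a b) (s := (γ : ℂ) * Complex.I)
  have h1 : ((γ : ℂ) * Complex.I).re = 0 := by simp
  have h2 : ((γ : ℂ) * Complex.I).im = γ := by simp
  rw [h1, h2] at h
  rw [h]
  refine congrFun (congrArg _ ?_) _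
  funext u
  rw [neg_zero, zero_mul, Real.exp_zero, one_smul, bfun_exp]

lemma fourier_continuous {f : ℝ → ℂ} (hf : Integrable f) : Continuous (𝓕 f) :=
  VectorFourier.fourierIntegral_continuous Real.continuous_fourierChar
    (by exact continuous_inner) hf

lemma integrable_fourier_Gfun {a b : ℂ} (ha : 0 < a.re) (hb : 0 < b.re) :
    Integrable (𝓕 (Gfun b (a + b))) := by
  set g0 := Gfun b (a + b) with hg0def
  set g1 : ℝ → ℂ := fun u => -b * Gfun b (a + b) u + (a + b) * Gfun (b + 1) (a + b + 1) u
    with hg1def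
  set g2 : ℝ → ℂ := fun u => (b * b) * Gfun b (a + b) u
      + (-(b * (a + b)) - (a + b) * (b + 1)) * Gfun (b + 1) (a + b + 1) u
      + ((a + b) * (a + b + 1)) * Gfun (b + 2) (a + b + 2) u with hg2def
  have hG0 : Integrable (Gfun b (a + b)) := integrable_Gfun hb (Gfun_re_lt ha)
  have hG1 : Integrable (Gfun (b + 1) (a + b + 1)) := by
    refine integrable_Gfun (by simp [Complex.add_re]; linarith) ?_
    simp only [Complex.add_re, Complex.one_re]; linarith
  have hG2 : Integrable (Gfun (b + 2) (a + b + 2)) := by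
    refine integrable_Gfun ?_ ?_ <;>
      simp only [Complex.add_re, Complex.one_re, Complex.re_ofNat] <;> linarith
  have hg1 : Integrable g1 := (hG0.const_mul _).add (hG1.const_mul _)
  have hg2 : Integrable g2 := ((hG0.const_mul _).add (hG1.const_mul _)).add (hG2.const_mul _)
  have hd0 : ∀ u, HasDerivAt g0 (g1 u) u := fun u => hasDerivAt_Gfun b (a + b) u
  have hd1 : ∀ u, HasDerivAt g1 (g2 u) u := by
    intro u
    have h1 := (hasDerivAt_Gfun b (a + b) u).const_mul (-b)
    have h2 := (hasDerivAt_Gfun (b + 1) (a + b + 1) u).const_mul (a + b)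
    have := h1.add h2
    convert this using 1
    · rfl
    · rfl
    rw [hg2def]
    ring_nf
  have hderiv0 : deriv g0 = g1 := funext fun u => (hd0 u).deriv
  have hderiv1 : deriv g1 = g2 := funext fun u => (hd1 u).deriv
  have F1 : 𝓕 g1 = fun ξ : ℝ => (2 * π * Complex.I * ξ) • 𝓕 g0 ξ := by
    rw [← hderiv0]
    exact Real.fourier_deriv hG0 (fun u => (hd0 u).differentiableAt)
      (hderiv0 ▸ hg1)
  have F2 : 𝓕 g2 = fun ξ : ℝ => (2 * π * Complex.I * ξ) • 𝓕 g1 ξ := by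
    rw [← hderiv1]
    exact Real.fourier_deriv hg1 (fun u => (hd1 u).differentiableAt)
      (hderiv1 ▸ hg2)
  set C0 := ∫ u, ‖g0 u‖ with hC0
  set C2 := ∫ u, ‖g2 u‖ with hC2
  have hb0 : ∀ ξ : ℝ, ‖𝓕 g0 ξ‖ ≤ C0 := fun ξ =>
    VectorFourier.norm_fourierIntegral_le_integral_norm 𝐞 volume (innerₗ ℝ) g0 ξ
  have hb2 : ∀ ξ : ℝ, (2 * π) ^ 2 * ξ ^ 2 * ‖𝓕 g0 ξ‖ ≤ C2 := by
    intro ξ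
    have h := VectorFourier.norm_fourierIntegral_le_integral_norm 𝐞 volume (innerₗ ℝ) g2 ξ
    rw [show VectorFourier.fourierIntegral 𝐞 volume (innerₗ ℝ) g2 ξ = 𝓕 g2 ξ from rfl] at h
    rw [F2] at h
    simp only [F1] at h
    rw [norm_smul, norm_smul] at h
    have hn : ‖(2 * (π:ℂ) * Complex.I * ξ)‖ = 2 * π * |ξ| := by
      simp only [norm_mul, Complex.norm_I, Complex.norm_real, Real.norm_eq_abs,
        Complex.norm_two, mul_one]
      rw [_root_.abs_of_nonneg pi_pos.le]
    rw [hn] at h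
    calc (2 * π) ^ 2 * ξ ^ 2 * ‖𝓕 g0 ξ‖
        = 2 * π * |ξ| * (2 * π * |ξ| * ‖𝓕 g0 ξ‖) := by rw [← _root_.sq_abs ξ]; ring
      _ ≤ C2 := h
  set K := C0 + C2 / (2 * π) ^ 2 with hK
  have hbound : ∀ ξ : ℝ, ‖𝓕 g0 ξ‖ ≤ K * (1 + ξ ^ 2)⁻¹ := by
    intro ξ
    have hpos : (0:ℝ) < 1 + ξ ^ 2 := by positivity
    have h4 : (0:ℝ) < (2 * π) ^ 2 := by positivity
    have h1 : ξ ^ 2 * ‖𝓕 g0 ξ‖ ≤ C2 / (2 * π) ^ 2 := by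
      rw [le_div_iff₀ h4]
      calc ξ ^ 2 * ‖𝓕 g0 ξ‖ * (2 * π) ^ 2 = (2 * π) ^ 2 * ξ ^ 2 * ‖𝓕 g0 ξ‖ := by ring
        _ ≤ C2 := hb2 ξ
    rw [← div_eq_mul_inv, le_div_iff₀ hpos]
    calc ‖𝓕 g0 ξ‖ * (1 + ξ ^ 2) = ‖𝓕 g0 ξ‖ + ξ ^ 2 * ‖𝓕 g0 ξ‖ := by ring
      _ ≤ C0 + C2 / (2 * π) ^ 2 := add_le_add (hb0 ξ) h1
      _ = K := rfl
  refine (integrable_inv_one_add_sq.const_mul K).mono'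
    (fourier_continuous hG0).aestronglyMeasurable (ae_of_all _ fun ξ => ?_)
  simpa using hbound ξ

lemma verticalIntegrable_bfun {a b : ℂ} (ha : 0 < a.re) (hb : 0 < b.re) :
    Complex.VerticalIntegrable (mellin (bfun a b)) 0 := by
  unfold Complex.VerticalIntegrable
  have : Integrable (fun γ : ℝ => 𝓕 (Gfun b (a + b)) (γ / (2 * π))) :=
    (integrable_fourier_Gfun ha hb).comp_div (by positivity)
  refine this.congr ?_
  apply ae_of_all
  intro γ
  simp only [Complex.ofReal_zero, zero_add]
  exact (mellin_bfun_eq_fourier γ).symm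

lemma continuousAt_bfun (a b : ℂ) {y : ℝ} (hy : 0 < y) : ContinuousAt (bfun a b) y := by
  apply Complex.continuous_exp.continuousAt.comp
  apply ContinuousAt.sub
  · exact (continuousAt_const.mul
      ((Complex.continuous_ofReal.continuousAt).comp (Real.continuousAt_log hy.ne')))
  · refine continuousAt_const.mul
      ((Complex.continuous_ofReal.continuousAt).comp
        ((Real.continuousAt_log (by positivity)).comp ?_))
    exact (continuous_const.add continuous_id).continuousAt

lemma inversion_bfun {a b : ℂ} (ha : 0 < a.re) (hb : 0 < b.re) {x : ℝ} (hx : 0 < x) :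
    ∫ γ : ℝ, Complex.exp ((γ : ℂ) * Complex.I * (Real.log x : ℂ))
        * mellin (bfun a b) ((γ : ℂ) * Complex.I)
      = ((2 * π : ℝ) : ℂ) * bfun a b x⁻¹ := by
  have hinv := mellinInv_mellin_eq 0 (bfun a b) (inv_pos.mpr hx)
    (by simpa using mellinConvergent_bfun ha hb) (verticalIntegrable_bfun ha hb)
    (continuousAt_bfun a b (inv_pos.mpr hx))
  rw [mellinInv] at hinv
  simp only [Complex.ofReal_zero, zero_add] at hinv
  have hcongr : (fun y : ℝ => ((x⁻¹ : ℝ) : ℂ) ^ (-((y : ℂ) * Complex.I))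
        • mellin (bfun a b) ((y : ℂ) * Complex.I))
      = fun y : ℝ => Complex.exp ((y : ℂ) * Complex.I * (Real.log x : ℂ))
        * mellin (bfun a b) ((y : ℂ) * Complex.I) := by
    funext y
    rw [cpow_posreal (inv_pos.mpr hx), Real.log_inv, smul_eq_mul]
    congr 2
    push_cast
    ring
  rw [hcongr] at hinv
  rw [← hinv, real_smul]
  push_cast
  have hπ : (π : ℂ) ≠ 0 := Complex.ofReal_ne_zero.mpr pi_ne_zero
  field_simp
  congr 1; funext γ; congr 1 <;> congr 1 <;> ring

lemma integrable_M {a b : ℂ} (ha : 0 < a.re) (hb : 0 < b.re) :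
    Integrable (fun γ : ℝ => mellin (bfun a b) ((γ : ℂ) * Complex.I)) := by
  have := verticalIntegrable_bfun ha hb
  unfold Complex.VerticalIntegrable at this
  simpa [Complex.ofReal_zero, zero_add] using this

lemma continuous_M {a b : ℂ} (ha : 0 < a.re) (hb : 0 < b.re) :
    Continuous (fun γ : ℝ => mellin (bfun a b) ((γ : ℂ) * Complex.I)) := by
  have : (fun γ : ℝ => mellin (bfun a b) ((γ : ℂ) * Complex.I))
      = (𝓕 (Gfun b (a + b))) ∘ (fun γ : ℝ => γ / (2 * π)) := by
    funext γ
    exact mellin_bfun_eq_fourier γ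
  rw [this]
  exact (fourier_continuous (integrable_Gfun hb (Gfun_re_lt ha))).comp (by fun_prop)

lemma expterm_eq (a b : ℂ) (γ : ℝ) {x : ℝ} (hx : 0 < x) :
    Complex.exp (((γ : ℂ) * Complex.I - 1) * (Real.log x : ℂ)) * bfun a b x
      = Complex.exp ((γ : ℂ) * Complex.I * (Real.log x : ℂ)) * bInt b a x := by
  rw [bfun, bInt, ← Complex.exp_add, ← Complex.exp_add]
  congr 1
  ring

lemma norm_expterm (a b : ℂ) (γ : ℝ) {x : ℝ} (hx : 0 < x) :
    ‖Complex.exp (((γ : ℂ) * Complex.I - 1) * (Real.log x : ℂ)) * bfun a b x‖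
      = ‖bInt b a x‖ := by
  rw [expterm_eq a b γ hx, norm_mul]
  have : ‖Complex.exp ((γ : ℂ) * Complex.I * (Real.log x : ℂ))‖ = 1 := by
    rw [Complex.norm_exp]
    simp
  rw [this, one_mul]

lemma Q_integrable {a₁ b₁ a₂ b₂ : ℂ} (ha₁ : 0 < a₁.re) (ha₂ : 0 < a₂.re)
    (hb₁ : 0 < b₁.re) (hb₂ : 0 < b₂.re) :
    Integrable (fun z : ℝ × ℝ =>
        mellin (bfun a₁ b₁) ((z.1 : ℂ) * Complex.I)
          * (Complex.exp (((z.1 : ℂ) * Complex.I - 1) * (Real.log z.2 : ℂ)) * bfun a₂ b₂ z.2))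
      (volume.prod (volume.restrict (Ioi 0))) := by
  have hmeas : volume.prod (volume.restrict (Ioi (0:ℝ)))
      = ((volume : Measure ℝ).prod volume).restrict ((univ : Set ℝ) ×ˢ Ioi 0) := by
    rw [← Measure.prod_restrict, Measure.restrict_univ]
  have hms : MeasurableSet ((univ : Set ℝ) ×ˢ Ioi (0:ℝ)) :=
    MeasurableSet.univ.prod measurableSet_Ioi
  -- continuity on univ ×ˢ Ioi 0
  have hlog : ContinuousOn (fun p : ℝ × ℝ => ((Real.log p.2 : ℝ) : ℂ))
      ((univ : Set ℝ) ×ˢ Ioi 0) := by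
    intro p hp
    have h4 : ContinuousAt (fun q : ℝ × ℝ => Real.log q.2) p :=
      continuous_snd.continuousAt.log (ne_of_gt hp.2)
    exact (Complex.continuous_ofReal.continuousAt.comp h4).continuousWithinAt
  have hlog1 : ContinuousOn (fun p : ℝ × ℝ => ((Real.log (1 + p.2) : ℝ) : ℂ))
      ((univ : Set ℝ) ×ˢ Ioi 0) := by
    intro p hp
    have h2 : (0:ℝ) < 1 + p.2 := by have := hp.2; simp at this; linarith
    have h3 : ContinuousAt (fun q : ℝ × ℝ => (1:ℝ) + q.2) p :=
      (continuous_const.add continuous_snd).continuousAt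
    have h4 : ContinuousAt (fun q : ℝ × ℝ => Real.log (1 + q.2)) p :=
      h3.log h2.ne'
    exact (Complex.continuous_ofReal.continuousAt.comp h4).continuousWithinAt
  have hcont : ContinuousOn (fun p : ℝ × ℝ =>
      mellin (bfun a₁ b₁) ((p.1 : ℂ) * Complex.I)
        * (Complex.exp (((p.1 : ℂ) * Complex.I - 1) * (Real.log p.2 : ℂ))
          * bfun a₂ b₂ p.2)) ((univ : Set ℝ) ×ˢ Ioi 0) := by
    apply ContinuousOn.mul
    · exact ((continuous_M ha₁ hb₁).comp continuous_fst).continuousOn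
    apply ContinuousOn.mul
    · exact Complex.continuous_exp.comp_continuousOn
        (ContinuousOn.mul (by fun_prop) hlog)
    · unfold bfun
      exact Complex.continuous_exp.comp_continuousOn
        ((continuousOn_const.mul hlog).sub (continuousOn_const.mul hlog1))
  have haesm := hcont.aestronglyMeasurable (μ := (volume : Measure ℝ).prod volume) hms
  rw [← hmeas] at haesm
  have hbound : Integrable (fun z : ℝ × ℝ =>
      ‖mellin (bfun a₁ b₁) ((z.1 : ℂ) * Complex.I)‖ * ‖bInt b₂ a₂ z.2‖)
      (volume.prod (volume.restrict (Ioi 0))) :=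
    (integrable_M ha₁ hb₁).norm.mul_prod (bInt_integrableOn hb₂ ha₂).norm
  have hae : ∀ᵐ z : ℝ × ℝ ∂(volume.prod (volume.restrict (Ioi 0))), z.2 ∈ Ioi (0:ℝ) := by
    rw [hmeas]
    filter_upwards [ae_restrict_mem hms] with z hz
    exact hz.2
  refine hbound.mono' haesm ?_
  filter_upwards [hae] with z hz
  refine le_of_eq ?_
  rw [norm_mul, norm_expterm a₂ b₂ z.1 hz]

lemma key_integral {a₁ b₁ a₂ b₂ : ℂ} (ha₁ : 0 < a₁.re) (ha₂ : 0 < a₂.re)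
    (hb₁ : 0 < b₁.re) (hb₂ : 0 < b₂.re) :
    ∫ γ : ℝ, mellin (bfun a₁ b₁) ((γ : ℂ) * Complex.I)
        * mellin (bfun a₂ b₂) ((γ : ℂ) * Complex.I)
      = ((2 * π : ℝ) : ℂ) * (Complex.Gamma (a₁ + b₂) * Complex.Gamma (a₂ + b₁)
          / Complex.Gamma ((a₁ + b₂) + (a₂ + b₁))) := by
  have step1 : ∀ γ : ℝ, mellin (bfun a₁ b₁) ((γ : ℂ) * Complex.I)
      * mellin (bfun a₂ b₂) ((γ : ℂ) * Complex.I)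
      = ∫ x in Ioi (0:ℝ), mellin (bfun a₁ b₁) ((γ : ℂ) * Complex.I)
          * (Complex.exp (((γ : ℂ) * Complex.I - 1) * (Real.log x : ℂ)) * bfun a₂ b₂ x) := by
    intro γ
    rw [integral_const_mul]
    congr 1
    rw [mellin]
    apply setIntegral_congr_fun measurableSet_Ioi
    intro x hx
    show (x : ℂ) ^ ((γ : ℂ) * Complex.I - 1) • bfun a₂ b₂ x = _
    rw [smul_eq_mul, cpow_posreal hx]
  have step3 : ∀ x ∈ Ioi (0:ℝ),
      (∫ γ : ℝ, mellin (bfun a₁ b₁) ((γ : ℂ) * Complex.I)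
        * (Complex.exp (((γ : ℂ) * Complex.I - 1) * (Real.log x : ℂ)) * bfun a₂ b₂ x))
      = ((2 * π : ℝ) : ℂ) * bInt (a₁ + b₂) (a₂ + b₁) x := by
    intro x hx
    have hx' : (0:ℝ) < x := hx
    have hre : (fun γ : ℝ => mellin (bfun a₁ b₁) ((γ : ℂ) * Complex.I)
        * (Complex.exp (((γ : ℂ) * Complex.I - 1) * (Real.log x : ℂ)) * bfun a₂ b₂ x))
        = fun γ : ℝ => (Complex.exp ((γ : ℂ) * Complex.I * (Real.log x : ℂ))
            * mellin (bfun a₁ b₁) ((γ : ℂ) * Complex.I))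
          * (Complex.exp (-(Real.log x : ℂ)) * bfun a₂ b₂ x) := by
      funext γ
      rw [show (((γ : ℂ) * Complex.I - 1) * (Real.log x : ℂ))
          = (γ : ℂ) * Complex.I * (Real.log x : ℂ) + (-(Real.log x : ℂ)) by ring,
        Complex.exp_add]
      ring
    rw [hre, integral_mul_const, inversion_bfun ha₁ hb₁ hx']
    have : bfun a₁ b₁ x⁻¹ * (Complex.exp (-(Real.log x : ℂ)) * bfun a₂ b₂ x)
        = bInt (a₁ + b₂) (a₂ + b₁) x := by
      rw [bfun, bfun, bInt, ← Complex.exp_add, ← Complex.exp_add]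
      have hli : Real.log x⁻¹ = -Real.log x := Real.log_inv x
      have hl1 : Real.log (1 + x⁻¹) = Real.log (1 + x) - Real.log x := by
        rw [show (1:ℝ) + x⁻¹ = (1 + x) / x by field_simp; ring,
          Real.log_div (by positivity) hx'.ne']
      rw [hli, hl1]
      congr 1
      push_cast
      ring
    rw [mul_assoc, this]
  calc ∫ γ : ℝ, mellin (bfun a₁ b₁) ((γ : ℂ) * Complex.I)
        * mellin (bfun a₂ b₂) ((γ : ℂ) * Complex.I)
      = ∫ γ : ℝ, ∫ x in Ioi (0:ℝ), mellin (bfun a₁ b₁) ((γ : ℂ) * Complex.I)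
          * (Complex.exp (((γ : ℂ) * Complex.I - 1) * (Real.log x : ℂ)) * bfun a₂ b₂ x) := by
        exact integral_congr_ae (ae_of_all _ step1)
    _ = ∫ x in Ioi (0:ℝ), ∫ γ : ℝ, mellin (bfun a₁ b₁) ((γ : ℂ) * Complex.I)
          * (Complex.exp (((γ : ℂ) * Complex.I - 1) * (Real.log x : ℂ)) * bfun a₂ b₂ x) := by
        exact integral_integral_swap (f := fun (γ : ℝ) (x : ℝ) =>
          mellin (bfun a₁ b₁) ((γ : ℂ) * Complex.I)
            * (Complex.exp (((γ : ℂ) * Complex.I - 1) * (Real.log x : ℂ)) * bfun a₂ b₂ x))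
          (μ := (volume : Measure ℝ)) (ν := volume.restrict (Ioi 0))
          (Q_integrable ha₁ ha₂ hb₁ hb₂)
    _ = ∫ x in Ioi (0:ℝ), ((2 * π : ℝ) : ℂ) * bInt (a₁ + b₂) (a₂ + b₁) x := by
        exact setIntegral_congr_fun measurableSet_Ioi step3
    _ = ((2 * π : ℝ) : ℂ) * ∫ x in Ioi (0:ℝ), bInt (a₁ + b₂) (a₂ + b₁) x := by
        rw [integral_const_mul]
    _ = ((2 * π : ℝ) : ℂ) * (Complex.Gamma (a₁ + b₂) * Complex.Gamma (a₂ + b₁)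
          / Complex.Gamma ((a₁ + b₂) + (a₂ + b₁))) := by
        rw [bInt_integral (by simp [Complex.add_re]; linarith) (by simp [Complex.add_re]; linarith)]

end Barnes

open Barnes in
/-- First Barnes Lemma. -/
theorem first_barnes_lemma (a₁ a₂ b₁ b₂ : ℂ)
    (ha₁ : 0 < a₁.re) (ha₂ : 0 < a₂.re) (hb₁ : 0 < b₁.re) (hb₂ : 0 < b₂.re) :
    (1 / (2 * (π : ℂ))) *
      ∫ γ : ℝ, Complex.Gamma (a₁ - Complex.I * γ) * Complex.Gamma (a₂ - Complex.I * γ) *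
        Complex.Gamma (b₁ + Complex.I * γ) * Complex.Gamma (b₂ + Complex.I * γ)
    = Complex.Gamma (a₁ + b₁) * Complex.Gamma (a₁ + b₂) *
        Complex.Gamma (a₂ + b₁) * Complex.Gamma (a₂ + b₂) /
        Complex.Gamma (a₁ + a₂ + b₁ + b₂) := by
  have hre1 : ∀ γ : ℝ, 0 < (b₁ + (γ : ℂ) * Complex.I).re := by
    intro γ; simp [Complex.add_re]; exact hb₁
  have hre2 : ∀ γ : ℝ, 0 < (a₁ - (γ : ℂ) * Complex.I).re := by
    intro γ; simp [Complex.sub_re]; exact ha₁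
  have hre3 : ∀ γ : ℝ, 0 < (b₂ + (γ : ℂ) * Complex.I).re := by
    intro γ; simp [Complex.add_re]; exact hb₂
  have hre4 : ∀ γ : ℝ, 0 < (a₂ - (γ : ℂ) * Complex.I).re := by
    intro γ; simp [Complex.sub_re]; exact ha₂
  have hne₁ : Complex.Gamma (a₁ + b₁) ≠ 0 :=
    Gamma_ne_zero' (by simp [Complex.add_re]; linarith)
  have hne₂ : Complex.Gamma (a₂ + b₂) ≠ 0 :=
    Gamma_ne_zero' (by simp [Complex.add_re]; linarith)
  have hpt : (fun γ : ℝ => Complex.Gamma (a₁ - Complex.I * γ) * Complex.Gamma (a₂ - Complex.I * γ)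
        * Complex.Gamma (b₁ + Complex.I * γ) * Complex.Gamma (b₂ + Complex.I * γ))
      = fun γ : ℝ => (Complex.Gamma (a₁ + b₁) * Complex.Gamma (a₂ + b₂))
        * (mellin (bfun a₁ b₁) ((γ : ℂ) * Complex.I)
            * mellin (bfun a₂ b₂) ((γ : ℂ) * Complex.I)) := by
    funext γ
    rw [mellin_bfun ha₁ hb₁ _ (hre1 γ) (hre2 γ), mellin_bfun ha₂ hb₂ _ (hre3 γ) (hre4 γ)]
    rw [mul_comm Complex.I (γ : ℂ)]
    field_simp
  rw [hpt, integral_const_mul, key_integral ha₁ ha₂ hb₁ hb₂,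
    show (a₁ + b₂) + (a₂ + b₁) = a₁ + a₂ + b₁ + b₂ by ring]
  have hπ : (π : ℂ) ≠ 0 := Complex.ofReal_ne_zero.mpr pi_ne_zero
  have hS : Complex.Gamma (a₁ + a₂ + b₁ + b₂) ≠ 0 :=
    Gamma_ne_zero' (by simp [Complex.add_re]; linarith)
  push_cast
  field_simp
end

section
/- Fourier transform of the gl₂ Givental integrand: for real γ₁, γ₂ and real p, (1/√(2π)) ∫_{ℝ} dT e^{i(γ₁−γ₂)T − e^T} ∫_{ℝ} du e^{(i(γ₂−p)+1/2)u − e^{u−T}} = (1/√(2π)) Γ(i(γ₁−p) + 1/2) Γ(i(γ₂−p) + 1/2). -/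
open MeasureTheory Real

lemma gamma_exp_integral (z : ℂ) (hz : 0 < z.re) :
    ∫ x : ℝ, Complex.exp (z * x - Complex.exp x) = Complex.Gamma z := by
  rw [Complex.Gamma_eq_integral hz, Complex.GammaIntegral,
    show Set.Ioi (0:ℝ) = Real.exp '' Set.univ by
      rw [Set.image_univ, Real.range_exp],
    integral_image_eq_integral_abs_deriv_smul MeasurableSet.univ
      (fun x _ => (Real.hasDerivAt_exp x).hasDerivWithinAt)
      (Real.exp_injective.injOn), setIntegral_univ]
  refine integral_congr_ae (Filter.Eventually.of_forall fun x => ?_)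
  have hpos := Real.exp_pos x
  dsimp only
  rw [abs_of_pos hpos, Complex.real_smul]
  push_cast
  rw [show Complex.exp (x:ℂ) ^ (z - 1) = Complex.exp ((z - 1) * x) by
      rw [Complex.cpow_def_of_ne_zero (Complex.exp_ne_zero _),
        Complex.log_exp (by simpa using Real.pi_pos) (by simp [Real.pi_pos.le]), mul_comm],
    ← Complex.exp_add, ← Complex.exp_add]
  ring_nf

/-- Fourier transform of the gl₂ Givental integrand. -/
theorem gl2_givental_fourier (γ₁ γ₂ p : ℝ) :
    (1 / (Real.sqrt (2 * π) : ℂ)) *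
      ∫ T : ℝ, Complex.exp (Complex.I * (γ₁ - γ₂) * T - Complex.exp (T : ℂ)) *
        ∫ u : ℝ, Complex.exp ((Complex.I * (γ₂ - p) + 1/2) * u - Complex.exp ((u : ℂ) - T))
    = (1 / (Real.sqrt (2 * π) : ℂ)) *
        (Complex.Gamma (Complex.I * (γ₁ - p) + 1/2) *
          Complex.Gamma (Complex.I * (γ₂ - p) + 1/2)) := by
  set z : ℂ := Complex.I * (γ₂ - p) + 1/2 with hzdef
  set w : ℂ := Complex.I * (γ₁ - p) + 1/2 with hwdef
  have hzre : 0 < z.re := by simp [hzdef]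
  have hwre : 0 < w.re := by simp [hwdef]
  have hinner : ∀ T : ℝ,
      (∫ u : ℝ, Complex.exp (z * u - Complex.exp ((u : ℂ) - T)))
        = Complex.exp (z * T) * Complex.Gamma z := by
    intro T
    have := MeasureTheory.integral_add_right_eq_self (μ := volume)
      (fun u : ℝ => Complex.exp (z * u - Complex.exp ((u : ℂ) - T))) T
    rw [← this]
    have : ∀ u : ℝ, (fun u : ℝ => Complex.exp (z * u - Complex.exp ((u : ℂ) - T))) (u + T)
        = Complex.exp (z * T) * Complex.exp (z * u - Complex.exp (u : ℂ)) := by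
      intro u
      simp only [← Complex.exp_add]
      congr 1
      push_cast
      ring
    simp_rw [this]
    rw [integral_const_mul, gamma_exp_integral z hzre]
  congr 1
  calc ∫ T : ℝ, Complex.exp (Complex.I * (γ₁ - γ₂) * T - Complex.exp (T : ℂ)) *
        ∫ u : ℝ, Complex.exp (z * u - Complex.exp ((u : ℂ) - T))
      = ∫ T : ℝ, Complex.Gamma z * Complex.exp (w * T - Complex.exp (T : ℂ)) := by
        refine integral_congr_ae (Filter.Eventually.of_forall fun T => ?_)
        dsimp only
        rw [hinner T]
        rw [mul_comm (Complex.exp (z * T)) (Complex.Gamma z), ← mul_assoc, mul_comm _ (Complex.Gamma z), mul_assoc]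
        congr 1
        rw [← Complex.exp_add]
        congr 1
        simp only [hzdef, hwdef]
        ring
    _ = Complex.Gamma z * Complex.Gamma w := by
        rw [integral_const_mul, gamma_exp_integral w hwre]
    _ = Complex.Gamma w * Complex.Gamma z := mul_comm _ _
end
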